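/- Let a : [0,∞) → [0,∞) be nondecreasing and right-continuous with a(0) = 0, and let c(t) := inf{s ≥ 0 : a(s) > t} be its right inverse; assume c(t) < ∞ for all t ≥ 0. Let μ_a denote the Lebesgue–Stieltjes measure associated with a (so μ_a([0,t]) = a(t) for t ≥ 0, extending a by 0 on (−∞,0)). Then for every Borel measurable function f : [0,∞) → [0,∞], ∫_{[0,∞)} f(s) dμ_a(s) = ∫_{[0,∞)} f(c(s)) ds, where the right-hand side is the Lebesgue integral. -/

import Mathlib

open MeasureTheory Set Filter Function
open scoped ENNReal Topology

noncomputable section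

namespace Stmt7

/-- Lemma 3.10, equation (3.49): if `a` is a nondecreasing right-continuous
function with `a = 0` on `(-∞, 0]` (in particular `a 0 = 0`), whose right inverse
`c(t) = inf {s ≥ 0 : a(s) > t}` is finite for every `t ≥ 0`, then for every nonnegative Borel
function `f`, `∫_{[0,∞)} f dμ_a = ∫_{[0,∞)} f(c(s)) ds`, where `μ_a` is the Lebesgue–Stieltjes
measure of `a` and the right-hand side is a Lebesgue integral. -/
theorem stmt7 (a : StieltjesFunction ℝ)
    (ha0 : ∀ x : ℝ, x ≤ 0 → a x = 0)
    (hfin : ∀ t : ℝ, 0 ≤ t → ∃ s : ℝ, 0 ≤ s ∧ t < a s)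
    (c : ℝ → ℝ) (hc : ∀ t, c t = sInf {s : ℝ | 0 ≤ s ∧ t < a s})
    (f : ℝ → ℝ≥0∞) (hf : Measurable f) :
    ∫⁻ s in Set.Ici (0 : ℝ), f s ∂a.measure
      = ∫⁻ s in Set.Ici (0 : ℝ), f (c s) ∂(volume : Measure ℝ) := by
  have ha0' : a 0 = 0 := ha0 0 le_rfl
  have hanonneg : ∀ x, 0 ≤ a x := by
    intro x
    rcases le_or_gt x 0 with h | h
    · exact (ha0 x h).ge
    · rw [← ha0']; exact a.mono h.le
  -- the defining sets are nonempty and bounded below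
  have hne : ∀ t : ℝ, {s : ℝ | 0 ≤ s ∧ t < a s}.Nonempty := by
    intro t
    rcases lt_or_ge t 0 with h | h
    · exact ⟨0, le_rfl, by rw [ha0']; exact h⟩
    · exact hfin t h
  have hbdd : ∀ t : ℝ, BddBelow {s : ℝ | 0 ≤ s ∧ t < a s} :=
    fun t => ⟨0, fun s hs => hs.1⟩
  -- c is nonnegative
  have hc0 : ∀ t, 0 ≤ c t := by
    intro t
    rw [hc]
    exact le_csInf (hne t) fun b hb => hb.1
  -- c is monotone
  have hmono : Monotone c := by
    intro t₁ t₂ h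
    rw [hc, hc]
    exact csInf_le_csInf (hbdd t₁) (hne t₂) fun s hs => ⟨hs.1, lt_of_le_of_lt h hs.2⟩
  have hcm : Measurable c := hmono.measurable
  -- if s < a x with x ≥ 0, then c s ≤ x
  have claim1 : ∀ s x : ℝ, 0 ≤ x → s < a x → c s ≤ x := by
    intro s x hx hs
    rw [hc]
    exact csInf_le (hbdd s) ⟨hx, hs⟩
  -- if c s ≤ x then s ≤ a x
  have claim2 : ∀ s x : ℝ, c s ≤ x → s ≤ a x := by
    intro s x hcs
    have key : ∀ u : ℝ, x < u → s < a u := by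
      intro u hu
      have : sInf {v : ℝ | 0 ≤ v ∧ s < a v} < u := by
        rw [← hc]; exact lt_of_le_of_lt hcs hu
      obtain ⟨v, hv, hvu⟩ := exists_lt_of_csInf_lt (hne s) this
      exact lt_of_lt_of_le hv.2 (a.mono hvu.le)
    have htend : Tendsto a (𝓝[>] x) (𝓝 (a x)) :=
      (a.right_continuous x).mono_left (nhdsWithin_mono x Ioi_subset_Ici_self)
    exact ge_of_tendsto htend (eventually_nhdsWithin_of_forall fun u hu => (key u hu).le)
  -- the key set computation: for x ≥ 0, {s ≥ 0 : c s ≤ x} has measure a x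
  have hμIic : ∀ x : ℝ, Measure.map c (volume.restrict (Ici 0)) (Iic x)
      = ENNReal.ofReal (a x) := by
    intro x
    rw [Measure.map_apply hcm measurableSet_Iic,
      Measure.restrict_apply (hcm measurableSet_Iic)]
    rcases lt_or_ge x 0 with hx | hx
    · have : c ⁻¹' Iic x ∩ Ici 0 = ∅ := by
        ext s
        simp only [mem_inter_iff, mem_preimage, mem_Iic, mem_Ici, mem_empty_iff_false,
          iff_false, not_and]
        intro h
        exact absurd (le_trans (hc0 s) h) (not_le.2 hx)
      rw [this, measure_empty, ha0 x hx.le, ENNReal.ofReal_zero]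
    · have hsub1 : Ico 0 (a x) ⊆ c ⁻¹' Iic x ∩ Ici 0 := by
        intro s hs
        exact ⟨claim1 s x hx hs.2, hs.1⟩
      have hsub2 : c ⁻¹' Iic x ∩ Ici 0 ⊆ Icc 0 (a x) := by
        intro s hs
        exact ⟨hs.2, claim2 s x hs.1⟩
      apply le_antisymm
      · calc volume (c ⁻¹' Iic x ∩ Ici 0) ≤ volume (Icc 0 (a x)) := measure_mono hsub2
          _ = ENNReal.ofReal (a x) := by rw [Real.volume_Icc, sub_zero]
      · calc ENNReal.ofReal (a x) = volume (Ico 0 (a x)) := by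
              rw [Real.volume_Ico, sub_zero]
          _ ≤ volume (c ⁻¹' Iic x ∩ Ici 0) := measure_mono hsub1
  -- Stieltjes side
  have hleftLim : Function.leftLim a 0 = 0 := by
    apply le_antisymm
    · exact (a.mono.leftLim_le le_rfl).trans ha0'.le
    · exact (ha0 (-1) (by norm_num)).ge.trans (a.mono.le_leftLim (by norm_num : (-1:ℝ) < 0))
  have hνIic : ∀ x : ℝ, a.measure.restrict (Ici 0) (Iic x) = ENNReal.ofReal (a x) := by
    intro x
    rw [Measure.restrict_apply measurableSet_Iic]
    rcases lt_or_ge x 0 with hx | hx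
    · have : Iic x ∩ Ici (0 : ℝ) = ∅ := by
        apply eq_empty_of_forall_notMem
        intro s hs
        exact absurd (le_trans hs.2 hs.1) (not_le.2 hx)
      rw [this, measure_empty, ha0 x hx.le, ENNReal.ofReal_zero]
    · have : Iic x ∩ Ici (0 : ℝ) = Icc 0 x := by rw [inter_comm, Ici_inter_Iic]
      rw [this, a.measure_Icc, hleftLim, sub_zero]
  -- both measures agree
  have hIicfin : ∀ x : ℝ, Measure.map c (volume.restrict (Ici 0)) (Iic x) ≠ ⊤ := by
    intro x; rw [hμIic]; exact ENNReal.ofReal_ne_top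
  have hloc : IsLocallyFiniteMeasure (Measure.map c (volume.restrict (Ici 0))) := by
    constructor
    intro x
    refine ⟨Iic (x + 1), Iic_mem_nhds (lt_add_one x), ?_⟩
    rw [hμIic]; exact ENNReal.ofReal_lt_top
  have hmap : Measure.map c (volume.restrict (Ici 0)) = a.measure.restrict (Ici 0) := by
    have key : ∀ (m : Measure ℝ), (∀ x, m (Iic x) = ENNReal.ofReal (a x)) →
        ∀ x y : ℝ, x < y → m (Ioc x y)
          = ENNReal.ofReal (a y) - ENNReal.ofReal (a x) := by
      intro m hm x y hxy
      rw [← Iic_sdiff_Iic, measure_diff (Iic_subset_Iic.2 hxy.le) nullMeasurableSet_Iic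
        (by rw [hm]; exact ENNReal.ofReal_ne_top), hm, hm]
    exact Measure.ext_of_Ioc _ _ fun x y hxy => by
      rw [key _ hμIic x y hxy, key _ hνIic x y hxy]
  calc ∫⁻ s in Set.Ici (0 : ℝ), f s ∂a.measure
      = ∫⁻ s, f s ∂(Measure.map c (volume.restrict (Ici 0))) := by rw [hmap]
    _ = ∫⁻ s in Set.Ici (0 : ℝ), f (c s) ∂(volume : Measure ℝ) := lintegral_map hf hcm

end Stmt7
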